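/- Fix a real number a with 0 < a < 1/√2 and set t₋ := (a^2/(1−a^2))^{1/6}. Then the curve z(t) defined in the context satisfies: (i) z(t) → a as t → 0 from the right; (ii) z(t₋) = i·a/√(1 − 2a^2); and (iii) a/√(1 − 2a^2) > a^2/√(1 − 2a^2), i.e., the endpoint z(t₋) lies strictly above the point i·a^2/√(1 − 2a^2) on the imaginary axis. -/

import Mathlib

open Complex

/-- `ã₊(t) := √((1−a²) − a²t⁶)`. -/
noncomputable def aPlus (a t : ℝ) : ℝ := Real.sqrt ((1 - a ^ 2) - a ^ 2 * t ^ 6)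

/-- `ã₋(t) := √(a²t⁻⁶ − (1−a²))`. -/
noncomputable def aMinus (a t : ℝ) : ℝ := Real.sqrt (a ^ 2 / t ^ 6 - (1 - a ^ 2))

/-- `z(t) := (t³/(1−t⁶))(ã₋(t) + i ã₊(t))`. -/
noncomputable def zparam (a t : ℝ) : ℂ :=
  ((t : ℂ) ^ 3 / (1 - (t : ℂ) ^ 6)) * ((aMinus a t : ℂ) + Complex.I * (aPlus a t : ℂ))

set_option maxHeartbeats 1000000 in
/-- Endpoint behavior of the arc `z(t)`, `t ∈ (0, t₋]`, with `t₋ = (a²/(1−a²))^{1/6}`: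
(i) `z(t) → a` as `t → 0⁺`; (ii) `z(t₋) = i a/√(1−2a²)`;
(iii) `a/√(1−2a²) > a²/√(1−2a²)`. -/
theorem arc_endpoints (a : ℝ) (ha0 : 0 < a) (ha1 : a < 1 / Real.sqrt 2) :
    Filter.Tendsto (zparam a) (nhdsWithin 0 (Set.Ioi 0)) (nhds (a : ℂ)) ∧
    zparam a ((a ^ 2 / (1 - a ^ 2)) ^ ((1 : ℝ) / 6))
      = Complex.I * ((a / Real.sqrt (1 - 2 * a ^ 2) : ℝ) : ℂ) ∧
    a ^ 2 / Real.sqrt (1 - 2 * a ^ 2) < a / Real.sqrt (1 - 2 * a ^ 2) := by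
  have hs2 : (Real.sqrt 2) ^ 2 = 2 := Real.sq_sqrt (by norm_num)
  have ha2 : a ^ 2 < 1 / 2 := by
    have := pow_lt_pow_left₀ ha1 ha0.le (n := 2) (by norm_num)
    rwa [div_pow, one_pow, hs2] at this
  have hc : 0 < 1 - 2 * a ^ 2 := by linarith
  have hb : 0 < 1 - a ^ 2 := by nlinarith
  have hbne : (1 - a ^ 2) ≠ 0 := ne_of_gt hb
  have hcne : (1 - 2 * a ^ 2) ≠ 0 := ne_of_gt hc
  have hsc : 0 < Real.sqrt (1 - 2 * a ^ 2) := Real.sqrt_pos.mpr hc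
  have ha_lt1 : a < 1 := by nlinarith
  refine ⟨?_, ?_, ?_⟩
  · -- part (i)
    set g : ℝ → ℂ := fun t =>
      (1 / (1 - (t : ℂ) ^ 6)) *
        ((Real.sqrt (a ^ 2 - (1 - a ^ 2) * t ^ 6) : ℂ) + Complex.I * ((t : ℂ) ^ 3 * (aPlus a t : ℂ)))
      with hgdef
    have heq : ∀ t ∈ Set.Ioi (0:ℝ), zparam a t = g t := by
      intro t ht
      have ht0 : 0 < t := ht
      have hreal : t ^ 3 * aMinus a t = Real.sqrt (a ^ 2 - (1 - a ^ 2) * t ^ 6) := by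
        rw [aMinus]
        rw [show a ^ 2 - (1 - a ^ 2) * t ^ 6 = t ^ 6 * (a ^ 2 / t ^ 6 - (1 - a ^ 2)) by
          field_simp]
        rw [Real.sqrt_mul (by positivity)]
        rw [show (t:ℝ) ^ 6 = (t ^ 3) ^ 2 by ring, Real.sqrt_sq (by positivity)]
      have key : ((t:ℂ) ^ 3) * ((aMinus a t : ℝ) : ℂ)
          = ((Real.sqrt (a ^ 2 - (1 - a ^ 2) * t ^ 6) : ℝ) : ℂ) := by
        rw [← hreal]; push_cast; ring
      rw [zparam, hgdef]
      calc ((t : ℂ) ^ 3 / (1 - (t : ℂ) ^ 6)) * ((aMinus a t : ℂ) + Complex.I * (aPlus a t : ℂ))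
          = (1 / (1 - (t : ℂ) ^ 6)) *
            (((t:ℂ)^3 * (aMinus a t : ℂ)) + Complex.I * ((t : ℂ) ^ 3 * (aPlus a t : ℂ))) := by
            ring
        _ = _ := by rw [key]
    have hg0 : g 0 = (a : ℂ) := by
      simp only [hgdef]
      norm_num
      rw [Real.sqrt_sq ha0.le]
    have hgc : ContinuousAt g 0 := by
      apply ContinuousAt.mul
      · exact ContinuousAt.div continuousAt_const (by fun_prop) (by norm_num)
      · apply ContinuousAt.add
        · apply Complex.continuous_ofReal.continuousAt.comp
          apply Real.continuous_sqrt.continuousAt.comp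
          fun_prop
        · apply ContinuousAt.mul continuousAt_const
          apply ContinuousAt.mul (by fun_prop)
          apply Complex.continuous_ofReal.continuousAt.comp
          unfold aPlus
          apply Real.continuous_sqrt.continuousAt.comp
          fun_prop
      
    have : Filter.Tendsto g (nhdsWithin 0 (Set.Ioi 0)) (nhds (a : ℂ)) := by
      rw [← hg0]
      exact (hgc.tendsto).mono_left nhdsWithin_le_nhds
    refine this.congr' ?_
    filter_upwards [self_mem_nhdsWithin] with t ht
    exact (heq t ht).symm
  · -- part (ii)
    set s : ℝ := a ^ 2 / (1 - a ^ 2) with hsdef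
    have hspos : 0 < s := by positivity
    have hslt1 : s < 1 := by
      rw [hsdef, div_lt_one hb]; linarith
    set t : ℝ := s ^ ((1:ℝ)/6) with htdef
    have ht6 : t ^ 6 = s := by
      rw [htdef, ← Real.rpow_natCast (s ^ ((1:ℝ)/6)) 6, ← Real.rpow_mul hspos.le]
      norm_num
    have ht3 : t ^ 3 = Real.sqrt s := by
      rw [htdef, ← Real.rpow_natCast (s ^ ((1:ℝ)/6)) 3, ← Real.rpow_mul hspos.le,
        Real.sqrt_eq_rpow]
      norm_num
    have haM : aMinus a t = 0 := by
      rw [aMinus, ht6, hsdef]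
      rw [show a ^ 2 / (a ^ 2 / (1 - a ^ 2)) - (1 - a ^ 2) = 0 by
        field_simp; ring]
      exact Real.sqrt_zero
    have haP : aPlus a t = Real.sqrt ((1 - 2 * a ^ 2) / (1 - a ^ 2)) := by
      have h : (1 - a ^ 2) - a ^ 2 * s = (1 - 2 * a ^ 2) / (1 - a ^ 2) := by
        rw [hsdef]; field_simp; ring
      rw [aPlus, ht6, h]
    have h1s : 1 - s = (1 - 2 * a ^ 2) / (1 - a ^ 2) := by
      rw [hsdef]; field_simp; ring
    -- real computation
    have hreal : Real.sqrt s * Real.sqrt ((1 - 2 * a ^ 2) / (1 - a ^ 2)) / (1 - s)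
        = a / Real.sqrt (1 - 2 * a ^ 2) := by
      have hsb : (0:ℝ) < Real.sqrt (1 - a ^ 2) := Real.sqrt_pos.mpr hb
      have e1 : Real.sqrt (a ^ 2 / (1 - a ^ 2)) = a / Real.sqrt (1 - a ^ 2) := by
        rw [Real.sqrt_div (sq_nonneg a), Real.sqrt_sq ha0.le]
      have e2 : Real.sqrt ((1 - 2 * a ^ 2) / (1 - a ^ 2))
          = Real.sqrt (1 - 2 * a ^ 2) / Real.sqrt (1 - a ^ 2) := Real.sqrt_div hc.le _
      have hb2 : Real.sqrt (1 - a ^ 2) * Real.sqrt (1 - a ^ 2) = 1 - a ^ 2 :=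
        Real.mul_self_sqrt hb.le
      have hc2 : Real.sqrt (1 - 2 * a ^ 2) * Real.sqrt (1 - 2 * a ^ 2) = 1 - 2 * a ^ 2 :=
        Real.mul_self_sqrt hc.le
      rw [h1s, hsdef, e1, e2]
      field_simp
      rw [Real.sq_sqrt hb.le, show (1:ℝ) - a ^ 2 * 2 = 1 - 2 * a ^ 2 by ring, div_eq_div_iff hcne hsc.ne']
      linear_combination (1 - a ^ 2) * hc2
    have hz : zparam a t = Complex.I * ((Real.sqrt s * Real.sqrt ((1 - 2 * a ^ 2) / (1 - a ^ 2)) / (1 - s) : ℝ) : ℂ) := by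
      rw [zparam, haM, haP, ← ht3, ← ht6]
      push_cast
      have hden : (1 : ℂ) - (t:ℂ) ^ 6 ≠ 0 := by
        have h0 : (1:ℝ) - t ^ 6 ≠ 0 := by rw [ht6]; linarith
        rw [show ((1:ℂ) - (t:ℂ)^6) = ((1 - t^6 : ℝ) : ℂ) by push_cast; ring]
        exact_mod_cast h0
      field_simp
      ring
    rw [hz, hreal]
  · -- part (iii)
    exact (div_lt_div_iff_of_pos_right hsc).mpr (by nlinarith)
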